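/- Let S be a decision rule system with n(S) > 0 and let C ∈ {AR, EAR}. Then h_C(S) ≤ d(S)·β_C⁺(S). -/

import Mathlib

/- Common formal framework for decision rule systems and decision trees /
   acyclic decision graphs, following Durdymyradov & Moshkov. -/

attribute [local instance] Classical.propDecidable

noncomputable section

namespace DRS

/-- A decision rule `(a_{i₁}=δ₁) ∧ ⋯ ∧ (a_{i_m}=δ_m) → σ`:
`K` is the finite set of equations (attribute index, value), `rhs` is σ. -/
structure Rule where
  K : Finset (ℕ × ℕ)
  rhs : ℕ

/-- Well-formedness of a rule: the attributes on its left-hand side are pairwise different. -/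
def Rule.WF (r : Rule) : Prop := ∀ p ∈ r.K, ∀ q ∈ r.K, p.1 = q.1 → p = q

/-- A(r): the set of attributes of a rule. -/
def Rule.attrs (r : Rule) : Finset ℕ := r.K.image Prod.fst

/-- The length m of a rule. -/
def Rule.len (r : Rule) : ℕ := r.K.card

/-- A(S) -/
def attrs (S : Finset Rule) : Finset ℕ := S.biUnion Rule.attrs

/-- n(S) -/
def nPar (S : Finset Rule) : ℕ := (attrs S).card

/-- d(S): the maximum length of a rule of S. -/
def dPar (S : Finset Rule) : ℕ := S.sup Rule.len

/-- D(S): the set of right-hand sides. -/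
def rhsSet (S : Finset Rule) : Finset ℕ := S.image Rule.rhs

/-- V_S(a_i) -/
def VS (S : Finset Rule) (i : ℕ) : Finset ℕ :=
  ((S.biUnion Rule.K).filter fun p => p.1 = i).image Prod.snd

/-- k(S) -/
def kPar (S : Finset Rule) : ℕ := (attrs S).sup fun i => (VS S i).card

/-- Attribute values in trees are `Option ℕ`; `none` plays the role of the special value `*`.
`allowed S false i` is (the lift of) `V_S(a_i)`, and `allowed S true i` is `EV_S(a_i)`. -/
def allowed (S : Finset Rule) (ext : Bool) (i : ℕ) : Finset (Option ℕ) :=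
  (VS S i).image some ∪ (if ext then {none} else ∅)

/-- Consistency of an equation system over ω ∪ {*}. -/
def ConsistentE (E : Finset (ℕ × Option ℕ)) : Prop :=
  ∀ p ∈ E, ∀ q ∈ E, p.1 = q.1 → p.2 = q.2

/-- Lift the left-hand side of a rule to an equation system over ω ∪ {*}. -/
def liftK (K : Finset (ℕ × ℕ)) : Finset (ℕ × Option ℕ) :=
  K.image fun p => (p.1, some p.2)

/-- A finite directed labeled graph: the nodes are `0, …, n-1`, with a distinguished root,
each node carries either an attribute (working node) or a set of rules (terminal node),
and edges are labeled with elements of ω ∪ {*}. -/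
structure DGraph where
  n : ℕ
  root : ℕ
  label : ℕ → ℕ ⊕ Finset Rule
  edges : Finset (ℕ × Option ℕ × ℕ)

namespace DGraph

def step (G : DGraph) (u v : ℕ) : Prop := ∃ l, (u, l, v) ∈ G.edges

/-- The graph has no directed cycles. -/
def Acyclic (G : DGraph) : Prop := ∀ v, ¬ Relation.TransGen G.step v v

/-- A node is terminal if no edge leaves it. -/
def IsTerminal (G : DGraph) (v : ℕ) : Prop := ∀ e ∈ G.edges, e.1 ≠ v

/-- The set of rules attached to a (terminal) node. -/
def termSet (G : DGraph) (v : ℕ) : Finset Rule :=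
  Sum.elim (fun _ => (∅ : Finset Rule)) id (G.label v)

/-- `G` is an acyclic decision graph over the rule system `S`;
`ext = false` : branching over `V_S` (o-type), `ext = true` : branching over `EV_S` (e-type).
Terminal nodes are labeled with subsets of S; each working node is labeled with an
attribute `a` of `A(S)` and has exactly one leaving edge for every element of
`V_S(a)` (resp. `EV_S(a)`), the edges leaving it being labeled with these
pairwise different elements. -/
def IsDG (G : DGraph) (S : Finset Rule) (ext : Bool) : Prop :=
  G.root < G.n ∧
  (∀ e ∈ G.edges, e.1 < G.n ∧ e.2.2 < G.n) ∧
  G.Acyclic ∧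
  (∀ v < G.n,
    if G.IsTerminal v then
      ∃ Z : Finset Rule, G.label v = Sum.inr Z ∧ Z ⊆ S
    else
      ∃ a : ℕ, G.label v = Sum.inl a ∧ a ∈ attrs S ∧
        (∀ l : Option ℕ, (∃ w, (v, l, w) ∈ G.edges) ↔ l ∈ allowed S ext a) ∧
        (∀ l w w', (v, l, w) ∈ G.edges → (v, l, w') ∈ G.edges → w = w'))

/-- `G` is a finite directed tree with root: the root has no entering edge and every
other node has exactly one entering edge (together with acyclicity this makes the
graph a rooted tree). -/
def IsTree (G : DGraph) : Prop :=
  (∀ e ∈ G.edges, e.2.2 ≠ G.root) ∧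
  (∀ v < G.n, v ≠ G.root → ∃! e, e ∈ G.edges ∧ e.2.2 = v)

/-- `chainFrom G v p t`: the list `p` of (node, leaving-edge-label) pairs forms a
directed path in `G` starting at `v` and ending at `t`. -/
def chainFrom (G : DGraph) : ℕ → List (ℕ × Option ℕ) → ℕ → Prop
  | v, [], t => v = t
  | v, e :: rest, t => e.1 = v ∧ ∃ w, (v, e.2, w) ∈ G.edges ∧ chainFrom G w rest t

/-- A complete path: from the root to a terminal node; it is recorded by the list of
its working nodes with the labels of the edges taken, together with its terminal node. -/
def IsCompletePath (G : DGraph) (p : List (ℕ × Option ℕ)) (t : ℕ) : Prop :=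
  G.chainFrom G.root p t ∧ G.IsTerminal t ∧ t < G.n

/-- K(ξ): the equation system associated with a complete path. -/
def pathEqs (G : DGraph) (p : List (ℕ × Option ℕ)) : Finset (ℕ × Option ℕ) :=
  (p.filterMap fun e =>
    Sum.elim (fun a => some (a, e.2)) (fun _ => none) (G.label e.1)).toFinset

/-- L(Γ): the number of nodes. -/
def size (G : DGraph) : ℕ := G.n

/-- T(Γ): the number of terminal nodes labeled with pairwise different sets of rules. -/
def tCount (G : DGraph) : ℕ :=
  (((Finset.range G.n).filter fun v => G.IsTerminal v).image fun v => G.termSet v).card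

/-- h(Γ): the maximum number of working nodes on a complete path. -/
def depth (G : DGraph) : ℕ :=
  sSup {m | ∃ p t, G.IsCompletePath p t ∧ p.length = m}

/-- Path conditions for (the solutions of) the problems All Rules / EAll Rules. -/
def SolvesAR (G : DGraph) (S : Finset Rule) : Prop :=
  ∀ p t, G.IsCompletePath p t → ConsistentE (G.pathEqs p) →
    (∀ r ∈ G.termSet t, liftK r.K ⊆ G.pathEqs p) ∧
    (∀ r ∈ S, r ∉ G.termSet t → ¬ ConsistentE (liftK r.K ∪ G.pathEqs p))

/-- Path conditions for the problems All Decisions / EAll Decisions. -/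
def SolvesAD (G : DGraph) (S : Finset Rule) : Prop :=
  ∀ p t, G.IsCompletePath p t → ConsistentE (G.pathEqs p) →
    (∀ r ∈ G.termSet t, liftK r.K ⊆ G.pathEqs p) ∧
    (∀ r ∈ S, r ∉ G.termSet t → r.rhs ∉ (G.termSet t).image Rule.rhs →
      ¬ ConsistentE (liftK r.K ∪ G.pathEqs p))

/-- Path conditions for the problems Some Rules / ESome Rules. -/
def SolvesSR (G : DGraph) (S : Finset Rule) : Prop :=
  ∀ p t, G.IsCompletePath p t → ConsistentE (G.pathEqs p) →
    (∀ r ∈ G.termSet t, liftK r.K ⊆ G.pathEqs p) ∧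
    (G.termSet t = ∅ → ∀ r ∈ S, ¬ ConsistentE (liftK r.K ∪ G.pathEqs p))

end DGraph

/-- Γ is a decision tree over S solving AR(S) (an o-tree). -/
def TreeSolvesAR (S : Finset Rule) (G : DGraph) : Prop :=
  G.IsDG S false ∧ G.IsTree ∧ G.SolvesAR S
/-- Γ is a decision tree over S solving EAR(S) (an e-tree). -/
def TreeSolvesEAR (S : Finset Rule) (G : DGraph) : Prop :=
  G.IsDG S true ∧ G.IsTree ∧ G.SolvesAR S
/-- Γ is a decision tree over S solving AD(S) (an o-tree). -/
def TreeSolvesAD (S : Finset Rule) (G : DGraph) : Prop :=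
  G.IsDG S false ∧ G.IsTree ∧ G.SolvesAD S
/-- Γ is a decision tree over S solving EAD(S) (an e-tree). -/
def TreeSolvesEAD (S : Finset Rule) (G : DGraph) : Prop :=
  G.IsDG S true ∧ G.IsTree ∧ G.SolvesAD S
/-- Γ is a decision tree over S solving SR(S) (an o-tree). -/
def TreeSolvesSR (S : Finset Rule) (G : DGraph) : Prop :=
  G.IsDG S false ∧ G.IsTree ∧ G.SolvesSR S
/-- Γ is a decision tree over S solving ESR(S) (an e-tree). -/
def TreeSolvesESR (S : Finset Rule) (G : DGraph) : Prop :=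
  G.IsDG S true ∧ G.IsTree ∧ G.SolvesSR S

/-- L_AR(S): minimum number of nodes of a decision tree over S solving AR(S). -/
def L_AR (S : Finset Rule) : ℕ := sInf {m | ∃ G : DGraph, TreeSolvesAR S G ∧ G.size = m}
def L_EAR (S : Finset Rule) : ℕ := sInf {m | ∃ G : DGraph, TreeSolvesEAR S G ∧ G.size = m}
def L_AD (S : Finset Rule) : ℕ := sInf {m | ∃ G : DGraph, TreeSolvesAD S G ∧ G.size = m}
def L_EAD (S : Finset Rule) : ℕ := sInf {m | ∃ G : DGraph, TreeSolvesEAD S G ∧ G.size = m}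
def L_SR (S : Finset Rule) : ℕ := sInf {m | ∃ G : DGraph, TreeSolvesSR S G ∧ G.size = m}
def L_ESR (S : Finset Rule) : ℕ := sInf {m | ∃ G : DGraph, TreeSolvesESR S G ∧ G.size = m}

/-- T_AR(S): minimum number of differently-labeled terminal nodes of a decision tree
over S solving AR(S); similarly for the other problems. -/
def T_AR (S : Finset Rule) : ℕ := sInf {m | ∃ G : DGraph, TreeSolvesAR S G ∧ G.tCount = m}
def T_EAR (S : Finset Rule) : ℕ := sInf {m | ∃ G : DGraph, TreeSolvesEAR S G ∧ G.tCount = m}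
def T_AD (S : Finset Rule) : ℕ := sInf {m | ∃ G : DGraph, TreeSolvesAD S G ∧ G.tCount = m}
def T_EAD (S : Finset Rule) : ℕ := sInf {m | ∃ G : DGraph, TreeSolvesEAD S G ∧ G.tCount = m}
def T_SR (S : Finset Rule) : ℕ := sInf {m | ∃ G : DGraph, TreeSolvesSR S G ∧ G.tCount = m}
def T_ESR (S : Finset Rule) : ℕ := sInf {m | ∃ G : DGraph, TreeSolvesESR S G ∧ G.tCount = m}

/-- h_AR(S): minimum depth of a decision tree over S solving AR(S); similarly for the others. -/
def h_AR (S : Finset Rule) : ℕ := sInf {m | ∃ G : DGraph, TreeSolvesAR S G ∧ G.depth = m}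
def h_EAR (S : Finset Rule) : ℕ := sInf {m | ∃ G : DGraph, TreeSolvesEAR S G ∧ G.depth = m}
def h_AD (S : Finset Rule) : ℕ := sInf {m | ∃ G : DGraph, TreeSolvesAD S G ∧ G.depth = m}
def h_EAD (S : Finset Rule) : ℕ := sInf {m | ∃ G : DGraph, TreeSolvesEAD S G ∧ G.depth = m}
def h_SR (S : Finset Rule) : ℕ := sInf {m | ∃ G : DGraph, TreeSolvesSR S G ∧ G.depth = m}
def h_ESR (S : Finset Rule) : ℕ := sInf {m | ∃ G : DGraph, TreeSolvesESR S G ∧ G.depth = m}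

/-- L^DG_SR(S): minimum number of nodes of an acyclic decision graph solving SR(S). -/
def LDG_SR (S : Finset Rule) : ℕ :=
  sInf {m | ∃ G : DGraph, G.IsDG S false ∧ G.SolvesSR S ∧ G.size = m}
/-- L^DG_ESR(S): minimum number of nodes of an acyclic decision graph solving ESR(S). -/
def LDG_ESR (S : Finset Rule) : ℕ :=
  sInf {m | ∃ G : DGraph, G.IsDG S true ∧ G.SolvesSR S ∧ G.size = m}

/-- A node cover of the hypergraph G(S). -/
def IsNodeCover (S : Finset Rule) (B : Finset ℕ) : Prop :=
  B ⊆ attrs S ∧ ∀ r ∈ S, (Rule.attrs r).Nonempty → (Rule.attrs r ∩ B).Nonempty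

/-- β(S): the minimum cardinality of a node cover of the hypergraph G(S). -/
def beta (S : Finset Rule) : ℕ := sInf {c | ∃ B, IsNodeCover S B ∧ B.card = c}

/-- S⁺: the subsystem of S consisting of all rules of length d(S). -/
def Splus (S : Finset Rule) : Finset Rule := S.filter fun r => r.len = dPar S

/-- β⁺(S) = β(S⁺). -/
def betaPlus (S : Finset Rule) : ℕ := beta (Splus S)

/-- The rule r_α : delete from the left-hand side of r all equations belonging to α. -/
def Rule.restrict (r : Rule) (α : Finset (ℕ × Option ℕ)) : Rule :=
  ⟨r.K.filter fun p => (p.1, some p.2) ∉ α, r.rhs⟩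

/-- S_α : the system of the rules r_α for all r ∈ S with K(r) ∪ α consistent. -/
def restrict (S : Finset Rule) (α : Finset (ℕ × Option ℕ)) : Finset Rule :=
  (S.filter fun r => ConsistentE (liftK r.K ∪ α)).image fun r => r.restrict α

/-- E_C(S): consistent equation systems whose attributes are in A(S) and whose
values belong to V_S (ext = false) resp. EV_S (ext = true). -/
def ESys (S : Finset Rule) (ext : Bool) : Set (Finset (ℕ × Option ℕ)) :=
  {α | ConsistentE α ∧ ∀ p ∈ α, p.1 ∈ attrs S ∧ p.2 ∈ allowed S ext p.1}

/-- I_SR(S). -/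
def I_SR (S : Finset Rule) : Finset Rule :=
  if ∃ r ∈ S, r.len = 0 then S.filter fun r => r.len = 0 else S

/-- D₀(S): the right-hand sides of the rules of S of length 0. -/
def D0 (S : Finset Rule) : Finset ℕ := (S.filter fun r => r.len = 0).image Rule.rhs

/-- I_AD(S). -/
def I_AD (S : Finset Rule) : Finset Rule :=
  S.filter fun r => r.len = 0 ∨ r.rhs ∉ D0 S

def betaC (S : Finset Rule) (ext : Bool) : ℕ :=
  sSup {b | ∃ α ∈ ESys S ext, beta (restrict S α) = b}
def betaCplus (S : Finset Rule) (ext : Bool) : ℕ :=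
  sSup {b | ∃ α ∈ ESys S ext, betaPlus (restrict S α) = b}
def betaI (S : Finset Rule) (I : Finset Rule → Finset Rule) : ℕ :=
  sSup {b | ∃ α ∈ ESys S true, beta (I (restrict S α)) = b}
def betaIplus (S : Finset Rule) (I : Finset Rule → Finset Rule) : ℕ :=
  sSup {b | ∃ α ∈ ESys S true, betaPlus (I (restrict S α)) = b}

def beta_AR (S : Finset Rule) : ℕ := betaC S false
def beta_AD (S : Finset Rule) : ℕ := betaC S false
def beta_SR (S : Finset Rule) : ℕ := betaC S false
def beta_EAR (S : Finset Rule) : ℕ := betaC S true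
def beta_ARplus (S : Finset Rule) : ℕ := betaCplus S false
def beta_ADplus (S : Finset Rule) : ℕ := betaCplus S false
def beta_SRplus (S : Finset Rule) : ℕ := betaCplus S false
def beta_EARplus (S : Finset Rule) : ℕ := betaCplus S true
def beta_EAD (S : Finset Rule) : ℕ := betaI S I_AD
def beta_EADplus (S : Finset Rule) : ℕ := betaIplus S I_AD
def beta_ESR (S : Finset Rule) : ℕ := betaI S I_SR
def beta_ESRplus (S : Finset Rule) : ℕ := betaIplus S I_SR

/-- R_SR(S). -/
def R_SR (S : Finset Rule) : Finset Rule :=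
  S.filter fun r => ¬ ∃ r' ∈ S, r'.K ⊂ r.K

/-- R_AD(S). -/
def R_AD (S : Finset Rule) : Finset Rule :=
  S.filter fun r => ¬ ∃ r' ∈ S, r'.K ⊂ r.K ∧ r'.rhs = r.rhs

/-- A reduced decision rule system. -/
def Reduced (S : Finset Rule) : Prop :=
  attrs S ⊆ Finset.range (nPar S + 1) ∧
  rhsSet S ⊆ Finset.range ((rhsSet S).card + 1) ∧
  (∀ i ∈ attrs S, VS S i ⊆ Finset.range (kPar S + 1)) ∧
  1 ≤ dPar S

/-- Length of the binary representation of a natural number. -/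
def bitLen (m : ℕ) : ℕ := max 1 (Nat.size m)

/-- The length of the word "(a⟨i⟩=⟨δ⟩)" encoding one equation. -/
def eqLen (p : ℕ × ℕ) : ℕ := 4 + bitLen p.1 + bitLen p.2

/-- The length of the word encoding one rule (with the "∧" signs and "→"). -/
def Rule.wordLen (r : Rule) : ℕ :=
  (∑ p ∈ r.K, eqLen p) + (r.K.card - 1) + 1 + bitLen r.rhs

/-- size(S): the length of the word representing S (with ";" separating the rules). -/
def sizeS (S : Finset Rule) : ℕ := (∑ r ∈ S, r.wordLen) + (S.card - 1)
-- == Auxiliary development ==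

section Aux

open Finset

variable {S : Finset Rule} {ext : Bool}

/-! ### Basic lemmas about consistency and restriction -/

lemma consistentE_mono {E F : Finset (ℕ × Option ℕ)} (h : E ⊆ F) (hF : ConsistentE F) :
    ConsistentE E := fun p hp q hq => hF p (h hp) q (h hq)

lemma liftK_consistent {r : Rule} (h : r.WF) : ConsistentE (liftK r.K) := by
  intro p hp q hq hpq
  simp only [liftK, Finset.mem_image] at hp hq
  obtain ⟨x, hx, rfl⟩ := hp
  obtain ⟨y, hy, rfl⟩ := hq
  simp only at hpq
  have := h x hx y hy hpq
  rw [this]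

lemma mem_restrict {α : Finset (ℕ × Option ℕ)} {r' : Rule} :
    r' ∈ restrict S α ↔ ∃ r ∈ S, ConsistentE (liftK r.K ∪ α) ∧ r' = r.restrict α := by
  simp only [restrict, Finset.mem_image, Finset.mem_filter]
  constructor
  · rintro ⟨r, ⟨hr, hc⟩, rfl⟩; exact ⟨r, hr, hc, rfl⟩
  · rintro ⟨r, hr, hc, rfl⟩; exact ⟨r, ⟨hr, hc⟩, rfl⟩

lemma restrict_empty (hwf : ∀ r ∈ S, r.WF) : restrict S ∅ = S := by
  unfold restrict
  rw [Finset.filter_true_of_mem (fun r hr => by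
    simpa using liftK_consistent (hwf r hr))]
  have h : ∀ r ∈ S, r.restrict ∅ = r := by
    intro r _
    cases r with
    | mk K rhs => simp [Rule.restrict]
  calc S.image (fun r => r.restrict ∅) = S.image id := Finset.image_congr (fun r hr => h r hr)
    _ = S := Finset.image_id

lemma mem_attrs {a : ℕ} {T : Finset Rule} :
    a ∈ attrs T ↔ ∃ r ∈ T, ∃ p ∈ r.K, p.1 = a := by
  simp [attrs, Rule.attrs]

lemma attrs_mono {T T' : Finset Rule} (h : T ⊆ T') : attrs T ⊆ attrs T' := by
  intro a ha
  rw [mem_attrs] at ha ⊢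
  obtain ⟨r, hr, hp⟩ := ha
  exact ⟨r, h hr, hp⟩

lemma attrs_restrict_subset {α : Finset (ℕ × Option ℕ)} : attrs (restrict S α) ⊆ attrs S := by
  intro a ha
  rw [mem_attrs] at ha ⊢
  obtain ⟨r', hr', p, hp, hpa⟩ := ha
  rw [mem_restrict] at hr'
  obtain ⟨r, hr, _, rfl⟩ := hr'
  simp only [Rule.restrict, Finset.mem_filter] at hp
  exact ⟨r, hr, p, hp.1, hpa⟩

lemma not_mem_alpha {α : Finset (ℕ × Option ℕ)} {a : ℕ}
    (ha : a ∈ attrs (restrict S α)) : ∀ l, (a, l) ∉ α := by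
  intro l hl
  rw [mem_attrs] at ha
  obtain ⟨r', hr', p, hp, hpa⟩ := ha
  rw [mem_restrict] at hr'
  obtain ⟨r, _, hc, rfl⟩ := hr'
  simp only [Rule.restrict, Finset.mem_filter] at hp
  have h1 : (p.1, some p.2) ∈ liftK r.K ∪ α :=
    Finset.mem_union_left _ (Finset.mem_image_of_mem _ hp.1)
  have h2 : (a, l) ∈ liftK r.K ∪ α := Finset.mem_union_right _ hl
  have := hc _ h1 _ h2 (by simpa using hpa)
  simp only at this
  exact hp.2 (by rw [hpa] at *; rw [this]; exact hl)

lemma d_zero {α : Finset (ℕ × Option ℕ)} (h : dPar (restrict S α) = 0) {r : Rule}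
    (hr : r ∈ S) (hc : ConsistentE (liftK r.K ∪ α)) : liftK r.K ⊆ α := by
  have hmem : r.restrict α ∈ restrict S α := mem_restrict.mpr ⟨r, hr, hc, rfl⟩
  have hlen : (r.restrict α).len = 0 :=
    Nat.le_zero.mp (h ▸ Finset.le_sup (f := Rule.len) hmem)
  have hfil : r.K.filter (fun p => (p.1, some p.2) ∉ α) = ∅ :=
    Finset.card_eq_zero.mp hlen
  intro q hq
  simp only [liftK, Finset.mem_image] at hq
  obtain ⟨p, hp, rfl⟩ := hq
  by_contra hna
  have : p ∈ r.K.filter (fun p => (p.1, some p.2) ∉ α) := Finset.mem_filter.mpr ⟨hp, hna⟩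
  rw [hfil] at this
  exact absurd this (Finset.notMem_empty _)

/-! ### Covers -/

lemma attrs_cover (T : Finset Rule) : IsNodeCover T (attrs T) := by
  refine ⟨subset_rfl, fun r hr hne => ?_⟩
  obtain ⟨a, ha⟩ := hne
  exact ⟨a, Finset.mem_inter.mpr ⟨ha, mem_attrs.mpr (by
    rw [Rule.attrs, Finset.mem_image] at ha
    obtain ⟨p, hp, rfl⟩ := ha
    exact ⟨r, hr, p, hp, rfl⟩)⟩⟩

lemma exists_cover (T : Finset Rule) : ∃ B, IsNodeCover T B ∧ B.card = beta T :=
  Nat.sInf_mem (⟨(attrs T).card, attrs T, attrs_cover T, rfl⟩ :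
    {c | ∃ B, IsNodeCover T B ∧ B.card = c}.Nonempty)

lemma beta_le_card_attrs (T : Finset Rule) : beta T ≤ (attrs T).card :=
  Nat.sInf_le ⟨attrs T, attrs_cover T, rfl⟩

lemma betaPlus_restrict_le (α : Finset (ℕ × Option ℕ)) :
    betaPlus (restrict S α) ≤ nPar S := by
  refine le_trans (beta_le_card_attrs _) (Finset.card_le_card ?_)
  exact subset_trans (attrs_mono (Finset.filter_subset _ _)) attrs_restrict_subset

lemma betaPlus_le_betaCplus {α : Finset (ℕ × Option ℕ)} (hα : α ∈ ESys S ext) :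
    betaPlus (restrict S α) ≤ betaCplus S ext := by
  refine le_csSup ⟨nPar S, ?_⟩ ⟨α, hα, rfl⟩
  rintro b ⟨β', _, rfl⟩
  exact betaPlus_restrict_le β'

/-! ### Phase progress -/

lemma phase_progress {α α' : Finset (ℕ × Option ℕ)} {B : Finset ℕ}
    (hB : IsNodeCover (Splus (restrict S α)) B)
    (hd : 1 ≤ dPar (restrict S α))
    (hsub : α ⊆ α') (hB' : ∀ a ∈ B, ∃ l, (a, l) ∈ α') :
    dPar (restrict S α') + 1 ≤ dPar (restrict S α) := by
  set d := dPar (restrict S α) with hdd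
  have key : ∀ r'' ∈ restrict S α', r''.len ≤ d - 1 := by
    intro r'' hr''
    rw [mem_restrict] at hr''
    obtain ⟨r, hr, hc', rfl⟩ := hr''
    have hc : ConsistentE (liftK r.K ∪ α) :=
      consistentE_mono (Finset.union_subset_union_right hsub) hc'
    have hmemα : r.restrict α ∈ restrict S α := mem_restrict.mpr ⟨r, hr, hc, rfl⟩
    have hlenα : (r.restrict α).len ≤ d := Finset.le_sup (f := Rule.len) hmemα
    rcases eq_or_lt_of_le hlenα with heq | hlt
    · -- max length rule: use the cover
      have hplus : r.restrict α ∈ Splus (restrict S α) :=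
        Finset.mem_filter.mpr ⟨hmemα, heq⟩
      have hne : ((r.restrict α).attrs).Nonempty := by
        rw [Rule.attrs]
        apply Finset.Nonempty.image
        rw [← Finset.card_pos]
        have h2 : (r.restrict α).len = d := heq
        unfold Rule.len at h2
        omega
      obtain ⟨a, haa⟩ := hB.2 _ hplus hne
      rw [Finset.mem_inter] at haa
      obtain ⟨haA, haB⟩ := haa
      rw [Rule.attrs, Finset.mem_image] at haA
      obtain ⟨p, hpfil, hpa⟩ := haA
      simp only [Rule.restrict, Finset.mem_filter] at hpfil
      obtain ⟨l, hl⟩ := hB' a haB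
      have h1 : (p.1, some p.2) ∈ liftK r.K ∪ α' :=
        Finset.mem_union_left _ (Finset.mem_image_of_mem _ hpfil.1)
      have h2 : (a, l) ∈ liftK r.K ∪ α' := Finset.mem_union_right _ hl
      have hval := hc' _ h1 _ h2 (by simpa using hpa)
      simp only at hval
      have hpα' : (p.1, some p.2) ∈ α' := by rw [hpa, hval] at *; rw [hpa]; exact hl
      -- now r.restrict α' loses at least p
      have hsubset : (r.restrict α').K ⊆ ((r.restrict α).K).erase p := by
        intro q hq
        simp only [Rule.restrict, Finset.mem_filter] at hq
        refine Finset.mem_erase.mpr ⟨?_, ?_⟩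
        · rintro rfl; exact hq.2 hpα'
        · exact Finset.mem_filter.mpr ⟨hq.1, fun hmem => hq.2 (hsub hmem)⟩
      have hpmemα : p ∈ (r.restrict α).K := Finset.mem_filter.mpr ⟨hpfil.1, hpfil.2⟩
      have := Finset.card_le_card hsubset
      rw [Finset.card_erase_of_mem hpmemα] at this
      have hh : (r.restrict α).len = d := heq
      unfold Rule.len at *
      omega
    · -- shorter rule
      have hle : (r.restrict α').len ≤ (r.restrict α).len := by
        apply Finset.card_le_card
        intro q hq
        simp only [Rule.restrict, Finset.mem_filter] at hq ⊢
        exact ⟨hq.1, fun hmem => hq.2 (hsub hmem)⟩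
      omega
  have : dPar (restrict S α') ≤ d - 1 := Finset.sup_le key
  omega

end Aux

/-! ### Abstract decision trees -/

inductive DT where
  | leaf : Finset Rule → DT
  | node : ℕ → (Option ℕ → DT) → DT

namespace DT

def at' (S : Finset Rule) (ext : Bool) : DT → List (ℕ × Option ℕ) → Option DT
  | t, [] => some t
  | .leaf _, _ :: _ => none
  | .node a c, e :: p =>
      if e.1 = a ∧ e.2 ∈ allowed S ext a then at' S ext (c e.2) p else none

def depth' (S : Finset Rule) (ext : Bool) : DT → ℕ
  | .leaf _ => 0
  | .node a c => 1 + (allowed S ext a).sup fun l => depth' S ext (c l)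

end DT

section TreeLemmas

variable {S : Finset Rule} {ext : Bool}

lemma at'_append (p q : List (ℕ × Option ℕ)) (t : DT) :
    DT.at' S ext t (p ++ q) = (DT.at' S ext t p).bind (fun u => DT.at' S ext u q) := by
  induction p generalizing t with
  | nil => simp [DT.at']
  | cons e p ih =>
    cases t with
    | leaf Z => simp [DT.at']
    | node a c =>
      simp only [List.cons_append, DT.at']
      by_cases h : e.1 = a ∧ e.2 ∈ allowed S ext a
      · rw [if_pos h, if_pos h]; exact ih (c e.2)
      · rw [if_neg h, if_neg h]; rfl

lemma length_le_depth' {p : List (ℕ × Option ℕ)} {t : DT} {u : DT}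
    (h : DT.at' S ext t p = some u) : p.length ≤ DT.depth' S ext t := by
  induction p generalizing t with
  | nil => simp
  | cons e p ih =>
    cases t with
    | leaf Z => simp [DT.at'] at h
    | node a c =>
      simp only [DT.at'] at h
      by_cases hc : e.1 = a ∧ e.2 ∈ allowed S ext a
      · rw [if_pos hc] at h
        have := ih h
        have hle : DT.depth' S ext (c e.2) ≤
            (allowed S ext a).sup fun l => DT.depth' S ext (c l) :=
          Finset.le_sup (f := fun l => DT.depth' S ext (c l)) hc.2
        simp only [DT.depth', List.length_cons]
        omega
      · rw [if_neg hc] at h; exact absurd h (by simp)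

/-! ### The greedy construction -/

def chainT (next : Finset (ℕ × Option ℕ) → DT) : List ℕ → Finset (ℕ × Option ℕ) → DT
  | [], α => next α
  | a :: L, α => .node a fun l => chainT next L (insert (a, l) α)

def goodSet (S : Finset Rule) (α : Finset (ℕ × Option ℕ)) : Finset Rule :=
  S.filter fun r => liftK r.K ⊆ α

def coverOf (T : Finset Rule) : Finset ℕ := (exists_cover T).choose

lemma coverOf_isCover (T : Finset Rule) : IsNodeCover T (coverOf T) :=
  (exists_cover T).choose_spec.1

lemma coverOf_card (T : Finset Rule) : (coverOf T).card = beta T :=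
  (exists_cover T).choose_spec.2

def coverL (S : Finset Rule) (α : Finset (ℕ × Option ℕ)) : List ℕ :=
  (coverOf (Splus (restrict S α))).toList

def build (S : Finset Rule) : ℕ → Finset (ℕ × Option ℕ) → DT
  | 0, α => .leaf (goodSet S α)
  | k+1, α =>
      if dPar (restrict S α) = 0 then .leaf (goodSet S α)
      else chainT (build S k) (coverL S α) α

/-! ### Analysis of `chainT` -/

lemma at_chainT (next : Finset (ℕ × Option ℕ) → DT) :
    ∀ (L : List ℕ) (α : Finset (ℕ × Option ℕ)) (p : List (ℕ × Option ℕ)) (u : DT),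
    DT.at' S ext (chainT next L α) p = some u →
    (∃ a c, u = DT.node a c ∧ a ∈ L) ∨
    ∃ p₁ p₂, p = p₁ ++ p₂ ∧ p₁.map Prod.fst = L ∧
      (∀ e ∈ p₁, e.2 ∈ allowed S ext e.1) ∧
      DT.at' S ext (next (α ∪ p₁.toFinset)) p₂ = some u := by
  intro L
  induction L with
  | nil =>
    intro α p u h
    right
    exact ⟨[], p, by simp, rfl, by simp, by simpa [chainT] using h⟩
  | cons a L ih =>
    intro α p u h
    simp only [chainT] at h
    cases p with
    | nil =>
      left
      simp only [DT.at'] at h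
      exact ⟨a, _, (Option.some.inj h).symm, List.mem_cons_self⟩
    | cons e p =>
      simp only [DT.at'] at h
      by_cases hc : e.1 = a ∧ e.2 ∈ allowed S ext a
      · rw [if_pos hc] at h
        rcases ih (insert (a, e.2) α) p u h with hL | ⟨p₁, p₂, rfl, hfst, hall, hat⟩
        · left
          obtain ⟨a', c', hu, ha'⟩ := hL
          exact ⟨a', c', hu, List.mem_cons_of_mem a ha'⟩
        · right
          refine ⟨(a, e.2) :: p₁, p₂, ?_, by simp [hfst], ?_, ?_⟩
          · have : e = (a, e.2) := by rw [← hc.1]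
            rw [this]; rfl
          · intro e' he'
            rcases List.mem_cons.mp he' with rfl | hm
            · exact hc.2
            · exact hall e' hm
          · have hset : insert (a, e.2) α ∪ p₁.toFinset =
                α ∪ ((a, e.2) :: p₁).toFinset := by
              simp only [List.toFinset_cons]
              rw [Finset.insert_union, Finset.union_insert]
            rw [← hset]; exact hat
      · rw [if_neg hc] at h; exact absurd h (by simp)

lemma depth_chainT (next : Finset (ℕ × Option ℕ) → DT) (D : ℕ) :
    ∀ (L : List ℕ) (α : Finset (ℕ × Option ℕ)),
    (∀ p₁ : List (ℕ × Option ℕ), p₁.map Prod.fst = L →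
      (∀ e ∈ p₁, e.2 ∈ allowed S ext e.1) →
      DT.depth' S ext (next (α ∪ p₁.toFinset)) ≤ D) →
    DT.depth' S ext (chainT next L α) ≤ L.length + D := by
  intro L
  induction L with
  | nil =>
    intro α h
    simpa [chainT] using h [] rfl (by simp)
  | cons a L ih =>
    intro α h
    simp only [chainT, DT.depth', List.length_cons]
    have hsup : ((allowed S ext a).sup fun l =>
        DT.depth' S ext (chainT next L (insert (a, l) α))) ≤ L.length + D := by
      apply Finset.sup_le
      intro l hl
      apply ih
      intro p₁ hfst hall
      have := h ((a, l) :: p₁) (by simp [hfst]) (by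
        intro e' he'
        rcases List.mem_cons.mp he' with rfl | hm
        · exact hl
        · exact hall e' hm)
      have hset : insert (a, l) α ∪ p₁.toFinset = α ∪ ((a, l) :: p₁).toFinset := by
        simp only [List.toFinset_cons]
        rw [Finset.insert_union, Finset.union_insert]
      rw [hset]; exact this
    omega

/-! ### correctness of `build` -/

lemma ESys_step {α : Finset (ℕ × Option ℕ)} {B : Finset ℕ} {p₁ : List (ℕ × Option ℕ)}
    (hα : α ∈ ESys S ext) (hfst : p₁.map Prod.fst = B.toList)
    (hB : B ⊆ attrs (restrict S α))
    (hall : ∀ e ∈ p₁, e.2 ∈ allowed S ext e.1) :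
    (α ∪ p₁.toFinset) ∈ ESys S ext := by
  have hinj : ∀ x ∈ p₁, ∀ y ∈ p₁, x.1 = y.1 → x = y := by
    have hnd : (p₁.map Prod.fst).Nodup := by rw [hfst]; exact Finset.nodup_toList B
    exact fun x hx y hy hxy => List.inj_on_of_nodup_map hnd hx hy hxy
  have hmemB : ∀ e ∈ p₁, e.1 ∈ B := by
    intro e he
    have : e.1 ∈ p₁.map Prod.fst := List.mem_map_of_mem (f := Prod.fst) he
    rw [hfst] at this
    exact Finset.mem_toList.mp this
  constructor
  · -- consistency
    intro p hp q hq hpq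
    rw [Finset.mem_union] at hp hq
    rcases hp with hp | hp <;> rcases hq with hq | hq
    · exact hα.1 p hp q hq hpq
    · exfalso
      rw [List.mem_toFinset] at hq
      have : (q.1, p.2) ∈ α := by
        have : p = (q.1, p.2) := Prod.ext hpq rfl
        rwa [← this]
      exact not_mem_alpha (hB (hmemB q hq)) p.2 this
    · exfalso
      rw [List.mem_toFinset] at hp
      have : (p.1, q.2) ∈ α := by
        have : q = (p.1, q.2) := Prod.ext hpq.symm rfl
        rwa [← this]
      exact not_mem_alpha (hB (hmemB p hp)) q.2 this
    · rw [List.mem_toFinset] at hp hq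
      rw [hinj p hp q hq hpq]
  · intro p hp
    rw [Finset.mem_union] at hp
    rcases hp with hp | hp
    · exact hα.2 p hp
    · rw [List.mem_toFinset] at hp
      have h1 : p.1 ∈ attrs S := attrs_restrict_subset (hB (hmemB p hp))
      exact ⟨h1, hall p hp⟩

lemma cover_sub_attrs {α : Finset (ℕ × Option ℕ)} :
    coverOf (Splus (restrict S α)) ⊆ attrs (restrict S α) :=
  subset_trans (coverOf_isCover _).1 (attrs_mono (Finset.filter_subset _ _))

lemma hB'_of_fst {α : Finset (ℕ × Option ℕ)} {B : Finset ℕ} {p₁ : List (ℕ × Option ℕ)}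
    (hfst : p₁.map Prod.fst = B.toList) :
    ∀ a ∈ B, ∃ l, (a, l) ∈ α ∪ p₁.toFinset := by
  intro a ha
  have : a ∈ p₁.map Prod.fst := by rw [hfst]; exact Finset.mem_toList.mpr ha
  rw [List.mem_map] at this
  obtain ⟨e, he, rfl⟩ := this
  exact ⟨e.2, Finset.mem_union_right _ (List.mem_toFinset.mpr he)⟩

lemma depth_build : ∀ (k : ℕ) (α : Finset (ℕ × Option ℕ)), α ∈ ESys S ext →
    dPar (restrict S α) ≤ k →
    DT.depth' S ext (build S k α) ≤ k * betaCplus S ext := by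
  intro k
  induction k with
  | zero => intro α _ _; simp [build, DT.depth']
  | succ k ih =>
    intro α hα hd
    by_cases h0 : dPar (restrict S α) = 0
    · simp [build, h0, DT.depth']
    · rw [show build S (k+1) α = chainT (build S k) (coverL S α) α by
        simp [build, h0]]
      have hlen : (coverL S α).length = betaPlus (restrict S α) := by
        rw [coverL, Finset.length_toList, coverOf_card]; rfl
      have hβ : (coverL S α).length ≤ betaCplus S ext := by
        rw [hlen]; exact betaPlus_le_betaCplus hα
      have hmain := depth_chainT (S := S) (ext := ext) (build S k) (k * betaCplus S ext)
        (coverL S α) α (by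
          intro p₁ hfst hall
          have hstep : (α ∪ p₁.toFinset) ∈ ESys S ext :=
            ESys_step hα hfst cover_sub_attrs hall
          have hprog := phase_progress (coverOf_isCover (Splus (restrict S α)))
            (by omega) Finset.subset_union_left (hB'_of_fst hfst)
          exact ih _ hstep (by omega))
      have : (coverL S α).length + k * betaCplus S ext ≤ (k+1) * betaCplus S ext := by
        rw [Nat.succ_mul]; omega
      omega

lemma solve_build : ∀ (k : ℕ) (α : Finset (ℕ × Option ℕ)) (p : List (ℕ × Option ℕ))
    (Z : Finset Rule), dPar (restrict S α) ≤ k →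
    DT.at' S ext (build S k α) p = some (DT.leaf Z) →
    Z = goodSet S (α ∪ p.toFinset) ∧ dPar (restrict S (α ∪ p.toFinset)) = 0 := by
  intro k
  induction k with
  | zero =>
    intro α p Z hd h
    cases p with
    | nil =>
      simp only [build, DT.at'] at h
      have hZ := (DT.leaf.injEq _ _).mp (Option.some.inj h)
      simp only [List.toFinset_nil, Finset.union_empty]
      exact ⟨hZ.symm, by omega⟩
    | cons e p => simp [build, DT.at'] at h
  | succ k ih =>
    intro α p Z hd h
    by_cases h0 : dPar (restrict S α) = 0
    · rw [show build S (k+1) α = DT.leaf (goodSet S α) by simp [build, h0]] at h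
      cases p with
      | nil =>
        simp only [DT.at'] at h
        have hZ := (DT.leaf.injEq _ _).mp (Option.some.inj h)
        simp only [List.toFinset_nil, Finset.union_empty]
        exact ⟨hZ.symm, h0⟩
      | cons e p => simp [DT.at'] at h
    · rw [show build S (k+1) α = chainT (build S k) (coverL S α) α by
        simp [build, h0]] at h
      rcases at_chainT (build S k) (coverL S α) α p _ h with hL | ⟨p₁, p₂, rfl, hfst, hall, hat⟩
      · obtain ⟨a, c, hu, _⟩ := hL
        exact absurd hu (by simp)
      · have hprog := phase_progress (coverOf_isCover (Splus (restrict S α)))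
          (by omega) Finset.subset_union_left (hB'_of_fst hfst)
        obtain ⟨hZ, hd0⟩ := ih (α ∪ p₁.toFinset) p₂ Z (by omega) hat
        have hset : α ∪ p₁.toFinset ∪ p₂.toFinset = α ∪ (p₁ ++ p₂).toFinset := by
          rw [List.toFinset_append, Finset.union_assoc]
        rw [hset] at hZ hd0
        exact ⟨hZ, hd0⟩

lemma wf_build : ∀ (k : ℕ) (α : Finset (ℕ × Option ℕ)) (p : List (ℕ × Option ℕ)) (u : DT),
    DT.at' S ext (build S k α) p = some u →
    (∀ a c, u = DT.node a c → a ∈ attrs S) ∧ (∀ Z, u = DT.leaf Z → Z ⊆ S) := by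
  intro k
  induction k with
  | zero =>
    intro α p u h
    cases p with
    | nil =>
      simp only [build, DT.at'] at h
      rw [← Option.some.inj h]
      exact ⟨fun a c hac => absurd hac (by simp),
        fun Z hZ => by rw [← (DT.leaf.injEq _ _).mp hZ]; exact Finset.filter_subset _ _⟩
    | cons e p => simp [build, DT.at'] at h
  | succ k ih =>
    intro α p u h
    by_cases h0 : dPar (restrict S α) = 0
    · rw [show build S (k+1) α = DT.leaf (goodSet S α) by simp [build, h0]] at h
      cases p with
      | nil =>
        simp only [DT.at'] at h
        rw [← Option.some.inj h]
        exact ⟨fun a c hac => absurd hac (by simp),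
          fun Z hZ => by rw [← (DT.leaf.injEq _ _).mp hZ]; exact Finset.filter_subset _ _⟩
      | cons e p => simp [DT.at'] at h
    · rw [show build S (k+1) α = chainT (build S k) (coverL S α) α by
        simp [build, h0]] at h
      rcases at_chainT (build S k) (coverL S α) α p _ h with hL | ⟨p₁, p₂, rfl, hfst, hall, hat⟩
      · obtain ⟨a, c, rfl, haL⟩ := hL
        refine ⟨fun a' c' hac => ?_, fun Z hZ => absurd hZ (by simp)⟩
        injection hac with h1 h2
        subst h1
        have : a ∈ coverOf (Splus (restrict S α)) := by
          rw [coverL] at haL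
          exact Finset.mem_toList.mp haL
        exact attrs_restrict_subset (cover_sub_attrs this)
      · exact ih _ p₂ u hat
end TreeLemmas

/-! ### Compiling the tree to a `DGraph` -/

section Compile

variable {S : Finset Rule} {ext : Bool}

lemma allowed_nonempty {a : ℕ} (ha : a ∈ attrs S) : (allowed S ext a).Nonempty := by
  rw [mem_attrs] at ha
  obtain ⟨r, hr, p, hp, rfl⟩ := ha
  have hv : p.2 ∈ VS S p.1 := by
    rw [VS, Finset.mem_image]
    exact ⟨p, Finset.mem_filter.mpr ⟨Finset.mem_biUnion.mpr ⟨r, hr, hp⟩, rfl⟩, rfl⟩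
  exact ⟨some p.2, Finset.mem_union_left _ (Finset.mem_image_of_mem _ hv)⟩

def Lall (S : Finset Rule) : Finset (Option ℕ) :=
  insert none ((S.biUnion Rule.K).image fun p => some p.2)

lemma allowed_subset_Lall {a : ℕ} : allowed S ext a ⊆ Lall S := by
  intro l hl
  rw [allowed, Finset.mem_union] at hl
  rcases hl with hl | hl
  · rw [Finset.mem_image] at hl
    obtain ⟨δ, hδ, rfl⟩ := hl
    rw [VS, Finset.mem_image] at hδ
    obtain ⟨p, hp, rfl⟩ := hδ
    rw [Finset.mem_filter] at hp
    exact Finset.mem_insert_of_mem (Finset.mem_image_of_mem _ hp.1)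
  · cases ext with
    | false => simp at hl
    | true =>
      simp only [if_pos, Finset.mem_singleton] at hl
      rw [hl]; exact Finset.mem_insert_self _ _

def EE (S : Finset Rule) : Finset (ℕ × Option ℕ) := (attrs S) ×ˢ (Lall S)

def listsLe (E : Finset (ℕ × Option ℕ)) : ℕ → Finset (List (ℕ × Option ℕ))
  | 0 => {[]}
  | n+1 => {[]} ∪ (E ×ˢ listsLe E n).image fun q => q.1 :: q.2

lemma mem_listsLe {E : Finset (ℕ × Option ℕ)} :
    ∀ (n : ℕ) (l : List (ℕ × Option ℕ)),
      l ∈ listsLe E n ↔ (l.length ≤ n ∧ ∀ e ∈ l, e ∈ E) := by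
  intro n
  induction n with
  | zero =>
    intro l
    constructor
    · intro h
      rw [listsLe, Finset.mem_singleton] at h
      subst h; simp
    · rintro ⟨h1, _⟩
      rw [listsLe, Finset.mem_singleton]
      exact List.length_eq_zero_iff.mp (Nat.le_zero.mp h1)
  | succ n ih =>
    intro l
    rw [listsLe]
    simp only [Finset.mem_union, Finset.mem_singleton, Finset.mem_image, Finset.mem_product]
    constructor
    · rintro (rfl | ⟨⟨e, l'⟩, ⟨⟨he, hl'⟩, rfl⟩⟩)
      · simp
      · obtain ⟨hlen, hE⟩ := (ih l').mp hl'
        refine ⟨by simp only [List.length_cons]; omega, ?_⟩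
        intro e' he'
        rcases List.mem_cons.mp he' with rfl | hm
        · exact he
        · exact hE e' hm
    · rintro ⟨hlen, hE⟩
      cases l with
      | nil => left; rfl
      | cons e l' =>
        right
        refine ⟨(e, l'), ⟨⟨hE e List.mem_cons_self, (ih l').mpr ⟨?_, ?_⟩⟩, rfl⟩⟩
        · simp at hlen; omega
        · exact fun e' he' => hE e' (List.mem_cons_of_mem _ he')

def t0 (S : Finset Rule) : DT := build S (dPar S) ∅

def NN (S : Finset Rule) (ext : Bool) : ℕ := DT.depth' S ext (t0 S)

def HH (S : Finset Rule) (ext : Bool) : Finset (List (ℕ × Option ℕ)) :=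
  (listsLe (EE S) (NN S ext)).filter fun h => (DT.at' S ext (t0 S) h).isSome

lemma t0_node_attr {q : List (ℕ × Option ℕ)} {v : DT}
    (h : DT.at' S ext (t0 S) q = some v) :
    ∀ a c, v = DT.node a c → a ∈ attrs S :=
  (wf_build (dPar S) ∅ q v h).1

lemma t0_leaf_sub {q : List (ℕ × Option ℕ)} {Z : Finset Rule}
    (h : DT.at' S ext (t0 S) q = some (DT.leaf Z)) : Z ⊆ S :=
  (wf_build (dPar S) ∅ q _ h).2 Z rfl

lemma entries_of_at' :
    ∀ (p : List (ℕ × Option ℕ)) (t : DT),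
    (∀ q v, DT.at' S ext t q = some v → ∀ a c, v = DT.node a c → a ∈ attrs S) →
    ∀ u, DT.at' S ext t p = some u → ∀ e ∈ p, e ∈ EE S := by
  intro p
  induction p with
  | nil => intro t _ u _ e he; simp at he
  | cons e p ih =>
    intro t hyp u hu e' he'
    cases t with
    | leaf Z => simp [DT.at'] at hu
    | node a c =>
      simp only [DT.at'] at hu
      by_cases hc : e.1 = a ∧ e.2 ∈ allowed S ext a
      · rw [if_pos hc] at hu
        have ha : a ∈ attrs S := hyp [] (DT.node a c) (by simp [DT.at']) a c rfl
        rcases List.mem_cons.mp he' with rfl | hm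
        · rw [EE, Finset.mem_product]
          exact ⟨by rw [hc.1]; exact ha, allowed_subset_Lall hc.2⟩
        · refine ih (c e.2) ?_ u hu e' hm
          intro q v hq a' c' hv
          exact hyp (e :: q) v (by
            simp only [DT.at']; rw [if_pos hc]; exact hq) a' c' hv
      · rw [if_neg hc] at hu; exact absurd hu (by simp)

lemma mem_HH_isSome {h : List (ℕ × Option ℕ)} (hh : h ∈ HH S ext) :
    (DT.at' S ext (t0 S) h).isSome := (Finset.mem_filter.mp hh).2

lemma isSome_mem_HH {h : List (ℕ × Option ℕ)}
    (hs : (DT.at' S ext (t0 S) h).isSome) : h ∈ HH S ext := by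
  rw [HH, Finset.mem_filter]
  refine ⟨?_, hs⟩
  rw [mem_listsLe]
  obtain ⟨u, hu⟩ := Option.isSome_iff_exists.mp hs
  exact ⟨length_le_depth' hu,
    entries_of_at' h (t0 S) (fun q v hq => t0_node_attr hq) u hu⟩

lemma nil_mem_HH : [] ∈ HH S ext := isSome_mem_HH (by simp [DT.at'])

def idxF (S : Finset Rule) (ext : Bool) (h : List (ℕ × Option ℕ)) : ℕ :=
  if hm : h ∈ HH S ext then ((HH S ext).equivFin ⟨h, hm⟩ : Fin _) else 0

def decF (S : Finset Rule) (ext : Bool) (v : ℕ) : List (ℕ × Option ℕ) :=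
  if hv : v < (HH S ext).card then ((HH S ext).equivFin.symm ⟨v, hv⟩ : {x // x ∈ HH S ext})
  else []

lemma idxF_lt {h : List (ℕ × Option ℕ)} (hm : h ∈ HH S ext) :
    idxF S ext h < (HH S ext).card := by
  rw [idxF, dif_pos hm]; exact ((HH S ext).equivFin ⟨h, hm⟩).2

lemma decF_mem {v : ℕ} (hv : v < (HH S ext).card) : decF S ext v ∈ HH S ext := by
  rw [decF, dif_pos hv]; exact ((HH S ext).equivFin.symm ⟨v, hv⟩).2

lemma decF_idxF {h : List (ℕ × Option ℕ)} (hm : h ∈ HH S ext) :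
    decF S ext (idxF S ext h) = h := by
  rw [idxF, dif_pos hm, decF, dif_pos (((HH S ext).equivFin ⟨h, hm⟩).isLt)]
  simp

lemma idxF_decF {v : ℕ} (hv : v < (HH S ext).card) : idxF S ext (decF S ext v) = v := by
  rw [decF, dif_pos hv, idxF, dif_pos (((HH S ext).equivFin.symm ⟨v, hv⟩).2)]
  simp

lemma idxF_inj {x y : List (ℕ × Option ℕ)} (hx : x ∈ HH S ext) (hy : y ∈ HH S ext)
    (he : idxF S ext x = idxF S ext y) : x = y := by
  have := congrArg (decF S ext) he
  rwa [decF_idxF hx, decF_idxF hy] at this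

def theAttr (S : Finset Rule) (ext : Bool) (h : List (ℕ × Option ℕ)) : ℕ :=
  match DT.at' S ext (t0 S) h with
  | some (.node a _) => a
  | _ => 0

lemma theAttr_eq {h : List (ℕ × Option ℕ)} {a : ℕ} {c : Option ℕ → DT}
    (hat : DT.at' S ext (t0 S) h = some (.node a c)) : theAttr S ext h = a := by
  unfold theAttr; rw [hat]

def GG (S : Finset Rule) (ext : Bool) : DGraph where
  n := (HH S ext).card
  root := idxF S ext []
  label := fun v =>
    match DT.at' S ext (t0 S) (decF S ext v) with
    | some (.leaf Z) => Sum.inr Z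
    | some (.node a _) => Sum.inl a
    | none => Sum.inr ∅
  edges := ((HH S ext ×ˢ Lall S).filter fun q =>
      ∃ a c, DT.at' S ext (t0 S) q.1 = some (.node a c) ∧ q.2 ∈ allowed S ext a).image
    fun q => (idxF S ext q.1, q.2, idxF S ext (q.1 ++ [(theAttr S ext q.1, q.2)]))

lemma GG_label (v : ℕ) : (GG S ext).label v =
    match DT.at' S ext (t0 S) (decF S ext v) with
    | some (.leaf Z) => Sum.inr Z
    | some (.node a _) => Sum.inl a
    | none => Sum.inr ∅ := rfl

lemma mem_edges {u w : ℕ} {l : Option ℕ} :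
    (u, l, w) ∈ (GG S ext).edges ↔
    ∃ h ∈ HH S ext, ∃ a c, DT.at' S ext (t0 S) h = some (.node a c) ∧
      l ∈ allowed S ext a ∧ u = idxF S ext h ∧ w = idxF S ext (h ++ [(a, l)]) := by
  constructor
  · intro hmem
    simp only [GG, Finset.mem_image, Finset.mem_filter, Finset.mem_product] at hmem
    obtain ⟨⟨h, l'⟩, ⟨⟨hh, _⟩, a, c, hat, hal⟩, heq⟩ := hmem
    rw [Prod.mk.injEq, Prod.mk.injEq] at heq
    obtain ⟨h1, h2, h3⟩ := heq
    subst h2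
    refine ⟨h, hh, a, c, hat, hal, h1.symm, ?_⟩
    rw [← h3, theAttr_eq hat]
  · rintro ⟨h, hh, a, c, hat, hal, rfl, rfl⟩
    simp only [GG, Finset.mem_image, Finset.mem_filter, Finset.mem_product]
    refine ⟨(h, l), ⟨⟨hh, allowed_subset_Lall hal⟩, a, c, hat, hal⟩, ?_⟩
    rw [theAttr_eq hat]

lemma snoc_mem_HH {h : List (ℕ × Option ℕ)} {a : ℕ} {c : Option ℕ → DT} {l : Option ℕ}
    (hh : h ∈ HH S ext) (hat : DT.at' S ext (t0 S) h = some (.node a c))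
    (hal : l ∈ allowed S ext a) : h ++ [(a, l)] ∈ HH S ext := by
  apply isSome_mem_HH
  have hx : DT.at' S ext (t0 S) (h ++ [(a, l)]) = some (c l) := by
    rw [at'_append, hat]
    simp [DT.at', hal]
  rw [hx]; rfl

lemma prefix_mem_HH {h h' : List (ℕ × Option ℕ)} (hh : h ++ h' ∈ HH S ext) :
    h ∈ HH S ext := by
  apply isSome_mem_HH
  have := mem_HH_isSome hh
  rw [at'_append] at this
  cases hx : DT.at' S ext (t0 S) h with
  | none => rw [hx] at this; simp at this
  | some u => simp

lemma not_terminal_of_node {h : List (ℕ × Option ℕ)} {a : ℕ} {c : Option ℕ → DT}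
    (hh : h ∈ HH S ext) (hat : DT.at' S ext (t0 S) h = some (.node a c)) :
    ¬ (GG S ext).IsTerminal (idxF S ext h) := by
  have ha : a ∈ attrs S := t0_node_attr hat a c rfl
  obtain ⟨l, hl⟩ := allowed_nonempty ha
  intro hterm
  exact hterm (idxF S ext h, l, idxF S ext (h ++ [(a, l)]))
    (mem_edges.mpr ⟨h, hh, a, c, hat, hl, rfl, rfl⟩) rfl

lemma terminal_leaf {v : ℕ} (hv : v < (HH S ext).card)
    (hterm : (GG S ext).IsTerminal v) :
    ∃ Z, DT.at' S ext (t0 S) (decF S ext v) = some (.leaf Z) := by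
  obtain ⟨u, hu⟩ := Option.isSome_iff_exists.mp (mem_HH_isSome (decF_mem hv))
  cases u with
  | leaf Z => exact ⟨Z, hu⟩
  | node a c =>
    exfalso
    have := not_terminal_of_node (decF_mem hv) hu
    rw [idxF_decF hv] at this
    exact this hterm

lemma label_node {h : List (ℕ × Option ℕ)} {a : ℕ} {c : Option ℕ → DT}
    (hh : h ∈ HH S ext) (hat : DT.at' S ext (t0 S) h = some (.node a c)) :
    (GG S ext).label (idxF S ext h) = Sum.inl a := by
  rw [GG_label, decF_idxF hh, hat]

lemma termSet_eq {v : ℕ} {Z : Finset Rule}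
    (hat : DT.at' S ext (t0 S) (decF S ext v) = some (.leaf Z)) :
    (GG S ext).termSet v = Z := by
  rw [DGraph.termSet, GG_label, hat]
  rfl

lemma chain_corr :
    ∀ (p : List (ℕ × Option ℕ)) (h : List (ℕ × Option ℕ)) (v : ℕ), h ∈ HH S ext →
    (GG S ext).chainFrom (idxF S ext h) p v →
    ∃ ex, (h ++ ex) ∈ HH S ext ∧ v = idxF S ext (h ++ ex) ∧
      (p.filterMap fun e =>
        Sum.elim (fun a => some (a, e.2)) (fun _ => none) ((GG S ext).label e.1)) = ex ∧
      p.length = ex.length := by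
  intro p
  induction p with
  | nil =>
    intro h v hh hchain
    exact ⟨[], by simpa using hh, by simpa using hchain.symm, rfl, rfl⟩
  | cons e p ih =>
    intro h v hh hchain
    obtain ⟨he1, w, hw, hrest⟩ := hchain
    rw [mem_edges] at hw
    obtain ⟨h', hh', a, c, hat, hal, hid, rfl⟩ := hw
    have hhe : h' = h := idxF_inj hh' hh hid.symm
    subst hhe
    have hsnoc : h' ++ [(a, e.2)] ∈ HH S ext := snoc_mem_HH hh' hat hal
    obtain ⟨ex', hmem', hv', hlist', hlen'⟩ := ih (h' ++ [(a, e.2)]) v hsnoc hrest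
    have happ : h' ++ [(a, e.2)] ++ ex' = h' ++ ((a, e.2) :: ex') := by simp
    have hfe : (GG S ext).label e.1 = Sum.inl a := by
      rw [he1]; exact label_node hh' hat
    refine ⟨(a, e.2) :: ex', by rwa [happ] at hmem', by rwa [happ] at hv', ?_, by
      simp [hlen']⟩
    simp only [List.filterMap_cons, hfe, Sum.elim_inl]
    rw [hlist']

lemma GG_acyclic : (GG S ext).Acyclic := by
  have hstep : ∀ x y, (GG S ext).step x y →
      (decF S ext x).length < (decF S ext y).length := by
    rintro x y ⟨l, hl⟩
    rw [mem_edges] at hl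
    obtain ⟨h, hh, a, c, hat, hal, rfl, rfl⟩ := hl
    rw [decF_idxF hh, decF_idxF (snoc_mem_HH hh hat hal)]
    simp
  intro v hv
  have hmono : ∀ x y, Relation.TransGen (GG S ext).step x y →
      (decF S ext x).length < (decF S ext y).length := by
    intro x y hxy
    induction hxy with
    | single h => exact hstep _ _ h
    | tail _ h ihh => exact lt_trans ihh (hstep _ _ h)
  exact absurd (hmono v v hv) (lt_irrefl _)

lemma GG_isDG : (GG S ext).IsDG S ext := by
  refine ⟨idxF_lt nil_mem_HH, ?_, GG_acyclic, ?_⟩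
  · rintro ⟨u, l, w⟩ he
    rw [mem_edges] at he
    obtain ⟨h, hh, a, c, hat, hal, rfl, rfl⟩ := he
    exact ⟨idxF_lt hh, idxF_lt (snoc_mem_HH hh hat hal)⟩
  · intro v hv
    obtain ⟨u, hu⟩ := Option.isSome_iff_exists.mp (mem_HH_isSome (decF_mem hv))
    cases u with
    | leaf Z =>
      have hterm : (GG S ext).IsTerminal v := by
        rintro ⟨u', l', w'⟩ he hne
        rw [mem_edges] at he
        obtain ⟨h, hh, a, c, hat, hal, hid, _⟩ := he
        simp only at hne
        have : h = decF S ext v := by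
          rw [← decF_idxF hh, ← hid, hne]
        rw [this, hu] at hat
        simp at hat
      rw [if_pos hterm]
      exact ⟨Z, by rw [GG_label, hu], t0_leaf_sub hu⟩
    | node a c =>
      have hnterm : ¬ (GG S ext).IsTerminal v := by
        have := not_terminal_of_node (decF_mem hv) hu
        rwa [idxF_decF hv] at this
      rw [if_neg hnterm]
      refine ⟨a, by rw [GG_label, hu], t0_node_attr hu a c rfl, ?_, ?_⟩
      · intro l
        constructor
        · rintro ⟨w, hw⟩
          rw [mem_edges] at hw
          obtain ⟨h, hh, a', c', hat', hal', hid, _⟩ := hw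
          have hhd : h = decF S ext v := by rw [← decF_idxF hh, ← hid]
          rw [hhd, hu] at hat'
          have := Option.some.inj hat'
          injection this with h1 h2
          rwa [h1]
        · intro hl
          exact ⟨idxF S ext (decF S ext v ++ [(a, l)]),
            mem_edges.mpr ⟨decF S ext v, decF_mem hv, a, c, hu, hl,
              (idxF_decF hv).symm, rfl⟩⟩
      · intro l w w' hw hw'
        rw [mem_edges] at hw hw'
        obtain ⟨h1, hh1, a1, c1, hat1, _, hid1, rfl⟩ := hw
        obtain ⟨h2, hh2, a2, c2, hat2, _, hid2, rfl⟩ := hw'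
        have hh1d : h1 = decF S ext v := by rw [← decF_idxF hh1, ← hid1]
        have hh2d : h2 = decF S ext v := by rw [← decF_idxF hh2, ← hid2]
        subst hh1d
        rw [hu] at hat1
        injection Option.some.inj hat1 with ha1 _
        subst hh2d
        rw [hu] at hat2
        injection Option.some.inj hat2 with ha2 _
        rw [← ha1, ← ha2]

lemma GG_isTree : (GG S ext).IsTree := by
  constructor
  · rintro ⟨u', l', w'⟩ he
    rw [mem_edges] at he
    obtain ⟨h, hh, a, c, hat, hal, _, rfl⟩ := he
    simp only
    intro hroot
    have : h ++ [(a, l')] = [] :=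
      idxF_inj (snoc_mem_HH hh hat hal) nil_mem_HH hroot
    simp at this
  · intro v hv hne
    have hh : decF S ext v ∈ HH S ext := decF_mem hv
    have hne' : decF S ext v ≠ [] := by
      intro h0
      apply hne
      rw [← idxF_decF hv, h0]; rfl
    rcases List.eq_nil_or_concat' (decF S ext v) with h0 | ⟨g, e, hge⟩
    · exact absurd h0 hne'
    · have hgmem : g ∈ HH S ext := prefix_mem_HH (by rw [← hge]; exact hh)
      obtain ⟨u', hu'⟩ := Option.isSome_iff_exists.mp (mem_HH_isSome hgmem)
      have hsome := mem_HH_isSome hh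
      rw [hge, at'_append, hu'] at hsome
      cases u' with
      | leaf Z => simp [DT.at'] at hsome
      | node a c =>
        simp only [Option.bind_some, DT.at'] at hsome
        by_cases hcond : e.1 = a ∧ e.2 ∈ allowed S ext a
        · have hea : (a, e.2) = e := by
            rw [← hcond.1]
          have hmemedge : (idxF S ext g, e.2, v) ∈ (GG S ext).edges := by
            refine mem_edges.mpr ⟨g, hgmem, a, c, hu', hcond.2, rfl, ?_⟩
            rw [hea, ← hge, idxF_decF hv]
          refine ⟨(idxF S ext g, e.2, v), ⟨hmemedge, rfl⟩, ?_⟩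
          rintro ⟨u₂, l₂, w₂⟩ ⟨he₂, hw₂⟩
          simp only at hw₂
          rw [mem_edges] at he₂
          obtain ⟨h₂, hh₂, a₂, c₂, hat₂, hal₂, rfl, hid₂⟩ := he₂
          have hkey : h₂ ++ [(a₂, l₂)] = g ++ [e] := by
            apply idxF_inj (snoc_mem_HH hh₂ hat₂ hal₂) (by rw [← hge]; exact hh)
            rw [← hge, idxF_decF hv, ← hw₂]
            exact hid₂.symm
          obtain ⟨hg2, he2⟩ := List.append_inj' hkey rfl
          have he2' : (a₂, l₂) = e := List.head_eq_of_cons_eq he2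
          subst hg2
          rw [Prod.mk.injEq, Prod.mk.injEq]
          refine ⟨rfl, ?_, hw₂⟩
          have := congrArg Prod.snd he2'
          simpa using this
        · rw [if_neg hcond] at hsome
          simp at hsome

lemma GG_depth_le : (GG S ext).depth ≤ NN S ext := by
  rw [DGraph.depth]
  apply csSup_le'
  rintro m ⟨p, t, ⟨hchain, _, _⟩, rfl⟩
  have hroot : (GG S ext).root = idxF S ext [] := rfl
  rw [hroot] at hchain
  obtain ⟨ex, hmem, _, _, hlen⟩ := chain_corr p [] t nil_mem_HH hchain
  obtain ⟨u, hu⟩ := Option.isSome_iff_exists.mp (mem_HH_isSome hmem)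
  have := length_le_depth' hu
  simp only [List.nil_append] at this
  rw [hlen]
  exact this

lemma GG_solves (hwf : ∀ r ∈ S, r.WF) : (GG S ext).SolvesAR S := by
  intro p t hpath _
  obtain ⟨hchain, hterm, htn⟩ := hpath
  have hroot : (GG S ext).root = idxF S ext [] := rfl
  rw [hroot] at hchain
  obtain ⟨ex, hmem, hteq, hlist, _⟩ := chain_corr p [] t nil_mem_HH hchain
  simp only [List.nil_append] at hmem hteq
  obtain ⟨Z, hZat⟩ := terminal_leaf htn hterm
  have hdext : decF S ext t = ex := by rw [hteq, decF_idxF hmem]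
  rw [hdext] at hZat
  have hd0 : dPar (restrict S ∅) ≤ dPar S := by rw [restrict_empty hwf]
  obtain ⟨hZ, hdz⟩ := solve_build (dPar S) ∅ ex Z hd0 hZat
  rw [Finset.empty_union] at hZ hdz
  have hts : (GG S ext).termSet t = Z := termSet_eq (by rw [hdext]; exact hZat)
  have hpeq : (GG S ext).pathEqs p = ex.toFinset := by
    rw [DGraph.pathEqs, hlist]
  constructor
  · intro r hr
    rw [hts, hZ, goodSet, Finset.mem_filter] at hr
    rw [hpeq]
    exact hr.2
  · intro r hrS hrZ hcons'
    apply hrZ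
    rw [hts, hZ, goodSet, Finset.mem_filter]
    rw [hpeq] at hcons'
    exact ⟨hrS, d_zero hdz hrS hcons'⟩

lemma NN_le (hwf : ∀ r ∈ S, r.WF) : NN S ext ≤ dPar S * betaCplus S ext := by
  apply depth_build
  · exact ⟨fun p hp => absurd hp (Finset.notMem_empty _), fun p hp =>
      absurd hp (Finset.notMem_empty _)⟩
  · rw [restrict_empty hwf]

theorem exists_tree (hwf : ∀ r ∈ S, r.WF) :
    ∃ G : DGraph, (G.IsDG S ext ∧ G.IsTree ∧ G.SolvesAR S) ∧
      G.depth ≤ dPar S * betaCplus S ext :=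
  ⟨GG S ext, ⟨GG_isDG, GG_isTree, GG_solves hwf⟩,
    le_trans GG_depth_le (NN_le hwf)⟩

end Compile

/-- Lemma 15: for C ∈ {AR, EAR}, h_C(S) ≤ d(S)·β_C⁺(S). -/
theorem statement_13 (S : Finset Rule) (hS : S.Nonempty) (hwf : ∀ r ∈ S, r.WF)
    (hn : 0 < nPar S) :
    h_AR S ≤ dPar S * beta_ARplus S ∧ h_EAR S ≤ dPar S * beta_EARplus S := by
  constructor
  · obtain ⟨G, hG, hd⟩ := exists_tree (S := S) (ext := false) hwf
    exact le_trans (Nat.sInf_le ⟨G, hG, rfl⟩) hd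
  · obtain ⟨G, hG, hd⟩ := exists_tree (S := S) (ext := true) hwf
    exact le_trans (Nat.sInf_le ⟨G, hG, rfl⟩) hd

end DRS

end
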